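/- For the map S of Example 1 (on the triangle with vertices (−1,0),(1,0),(0,1), with branches A₁x + B₁ on the left subtriangle and A₂x + B₂ on the right subtriangle, A₁ = ½[[2,−1],[0,1]], A₂ = ½[[2,1],[0,1]], B₁ = (1/2,1/2), B₂ = (−1/2,1/2)), the number of continuity domains of S^n whose closure contains the point (0,1) equals 2^n; in particular the multiplicity entropy of S is log 2. -/

import Mathlib

def X1 : Set (ℝ × ℝ) := {p | p.1 < 0 ∧ 0 < p.2 ∧ p.2 < p.1 + 1}

def X2 : Set (ℝ × ℝ) := {p | 0 < p.1 ∧ 0 < p.2 ∧ p.2 < 1 - p.1}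

/-- The piecewise affine map of Example 1. -/
noncomputable def Smap (p : ℝ × ℝ) : ℝ × ℝ :=
  if p.1 < 0 then (p.1 - p.2 / 2 + 1 / 2, p.2 / 2 + 1 / 2)
  else (p.1 + p.2 / 2 - 1 / 2, p.2 / 2 + 1 / 2)

/-- The continuity domain of `S^n` with itinerary `w` (elements of the continuity
partition `Z^n` are exactly the nonempty such sets). -/
def itinDom (n : ℕ) (w : Fin n → Fin 2) : Set (ℝ × ℝ) :=
  {p | ∀ k : Fin n, Smap^[(k : ℕ)] p ∈ (if w k = 0 then X1 else X2)}

/-- Every itinerary is realized on a ray `v ↦ (t v, 1 - v)` into the apex `(0,1)`. -/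
theorem itinDom_ray (n : ℕ) (w : Fin n → Fin 2) :
    ∃ t : ℝ, |t| < 1 ∧ ∀ v : ℝ, 0 < v → v < 1 → (t * v, 1 - v) ∈ itinDom n w := by
  induction n with
  | zero => exact ⟨0, by norm_num, fun v _ _ k => k.elim0⟩
  | succ n ih =>
    obtain ⟨t', ht', hmem⟩ := ih (fun k => w k.succ)
    rw [abs_lt] at ht'
    by_cases h0 : w 0 = 0
    · -- left branch : t = (t' - 1)/2 ∈ (-1, 0)
      refine ⟨(t' - 1) / 2, by rw [abs_lt]; constructor <;> linarith, ?_⟩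
      intro v hv hv1
      have htneg : (t' - 1) / 2 < 0 := by linarith
      have hxneg : (t' - 1) / 2 * v < 0 := mul_neg_of_neg_of_pos htneg hv
      have hS : Smap ((t' - 1) / 2 * v, 1 - v) = (t' * (v / 2), 1 - v / 2) := by
        simp only [Smap, if_pos hxneg, Prod.mk.injEq]
        constructor <;> ring
      intro k
      refine Fin.cases ?_ ?_ k
      · simp only [Fin.val_zero, Function.iterate_zero, id_eq, h0, if_pos rfl]
        exact ⟨hxneg, by linarith, by nlinarith⟩
      · intro j
        have := hmem (v / 2) (by linarith) (by linarith) j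
        simpa [Fin.val_succ, Function.iterate_succ_apply, hS] using this
    · -- right branch : t = (t' + 1)/2 ∈ (0, 1)
      refine ⟨(t' + 1) / 2, by rw [abs_lt]; constructor <;> linarith, ?_⟩
      intro v hv hv1
      have htpos : 0 < (t' + 1) / 2 := by linarith
      have hxpos : 0 < (t' + 1) / 2 * v := mul_pos htpos hv
      have hS : Smap ((t' + 1) / 2 * v, 1 - v) = (t' * (v / 2), 1 - v / 2) := by
        simp only [Smap, if_neg (not_lt.mpr hxpos.le), Prod.mk.injEq]
        constructor <;> ring
      intro k
      refine Fin.cases ?_ ?_ k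
      · simp only [Fin.val_zero, Function.iterate_zero, id_eq, if_neg h0]
        exact ⟨hxpos, by linarith, by nlinarith⟩
      · intro j
        have := hmem (v / 2) (by linarith) (by linarith) j
        simpa [Fin.val_succ, Function.iterate_succ_apply, hS] using this

theorem apex_mem_closure (n : ℕ) (w : Fin n → Fin 2) :
    ((0, 1) : ℝ × ℝ) ∈ closure (itinDom n w) := by
  obtain ⟨t, _, hmem⟩ := itinDom_ray n w
  have hv : ∀ m : ℕ, (0 : ℝ) < 1 / (m + 2) ∧ (1 : ℝ) / (m + 2) < 1 := by
    intro m
    constructor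
    · positivity
    · rw [div_lt_one (by positivity)]
      have : (0:ℝ) ≤ (m:ℝ) := Nat.cast_nonneg m
      linarith
  have hvt : Filter.Tendsto (fun m : ℕ => (1 : ℝ) / (m + 2)) Filter.atTop (nhds 0) := by
    have : Filter.Tendsto (fun m : ℕ => ((m : ℝ) + 2)) Filter.atTop Filter.atTop :=
      Filter.tendsto_atTop_add_const_right _ 2 tendsto_natCast_atTop_atTop
    simpa [Pi.inv_def] using this.inv_tendsto_atTop
  have h1 : Filter.Tendsto (fun m : ℕ => t * (1 / ((m : ℝ) + 2))) Filter.atTop (nhds 0) := by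
    simpa using hvt.const_mul t
  have h2 : Filter.Tendsto (fun m : ℕ => 1 - 1 / ((m : ℝ) + 2)) Filter.atTop (nhds 1) := by
    simpa using hvt.const_sub 1
  exact mem_closure_of_tendsto (h1.prodMk_nhds h2)
    (Filter.Eventually.of_forall fun m => hmem _ (hv m).1 (hv m).2)

/-- For the map `S` of Example 1, the number of continuity domains of `S^n`
whose closure contains `(0,1)` equals `2^n`; in particular the multiplicity entropy of `S`
is `log 2`. -/
theorem Smap_multiplicity :
    (∀ n : ℕ, Nat.card {w : Fin n → Fin 2 | ((0, 1) : ℝ × ℝ) ∈ closure (itinDom n w)} = 2 ^ n) ∧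
    Filter.Tendsto
      (fun n : ℕ => Real.log
          (Nat.card {w : Fin n → Fin 2 | ((0, 1) : ℝ × ℝ) ∈ closure (itinDom n w)}) / n)
      Filter.atTop (nhds (Real.log 2)) := by
  have hcard : ∀ n : ℕ,
      Nat.card {w : Fin n → Fin 2 | ((0, 1) : ℝ × ℝ) ∈ closure (itinDom n w)} = 2 ^ n := by
    intro n
    have huniv : {w : Fin n → Fin 2 | ((0, 1) : ℝ × ℝ) ∈ closure (itinDom n w)} = Set.univ :=
      Set.eq_univ_of_forall fun w => apex_mem_closure n w
    rw [huniv, Nat.card_congr (Equiv.Set.univ _)]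
    simp [Nat.card_eq_fintype_card]
  refine ⟨hcard, ?_⟩
  have heq : ∀ᶠ n : ℕ in Filter.atTop,
      Real.log (Nat.card {w : Fin n → Fin 2 | ((0, 1) : ℝ × ℝ) ∈ closure (itinDom n w)}) / n
        = Real.log 2 := by
    filter_upwards [Filter.eventually_ge_atTop 1] with n hn
    rw [hcard n]
    push_cast
    rw [Real.log_pow]
    field_simp
  exact tendsto_const_nhds.congr' (heq.mono fun n h => h.symm)
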